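/- arXiv:0901.4400 — 3 statements merged into one kernel-verified Lean document; each statement's English description precedes it below -/
import Mathlib

section
/- Let f(x) = Σ_{j=1}^{n+1} c_j x^{a_j} where the exponent vectors a_1,...,a_{n+1} ∈ Z^n affinely span R^n and all coefficients c_j are nonzero and have the same sign. Then f has a zero in (R^*)^n (all coordinates nonzero) if and only if there exist indices i ∈ {1,...,n} and j, j' ∈ {1,...,n+1} such that a_{i,j} − a_{i,j'} is odd. -/
open Filter Real Finset

private lemma exp_zpow' (y : ℝ) (m : ℤ) : (Real.exp y) ^ m = Real.exp (m * y) := by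
  rw [← Real.rpow_intCast, Real.rpow_def_of_pos (Real.exp_pos y), Real.log_exp, mul_comm]

/-- Dominant term lemma. -/
private lemma dominant {N : ℕ} (L d : Fin N → ℝ) (j0 : Fin N)
    (hL : ∀ j, j ≠ j0 → L j < L j0) (hd : 0 < d j0) :
    ∀ᶠ T in atTop, 0 < ∑ j, d j * Real.exp (T * L j) := by
  have htend : Tendsto (fun T : ℝ => ∑ j, d j * Real.exp (T * (L j - L j0))) atTop
      (nhds (∑ j : Fin N, if j = j0 then d j0 else 0)) := by
    apply tendsto_finset_sum
    intro j _
    by_cases h : j = j0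
    · subst h
      simpa using tendsto_const_nhds.congr (fun T => by simp)
    · simp only [h, if_neg]
      have h0 : Tendsto (fun T : ℝ => Real.exp (T * (L j - L j0))) atTop (nhds 0) := by
        apply Real.tendsto_exp_atBot.comp
        exact Filter.Tendsto.atTop_mul_const_of_neg (sub_neg.mpr (hL j h)) Filter.tendsto_id
      simpa using h0.const_mul (d j)
  rw [Finset.sum_ite_eq' Finset.univ j0 (fun _ => d j0)] at htend
  simp only [Finset.mem_univ, if_true] at htend
  have hev : ∀ᶠ T in atTop, 0 < ∑ j, d j * Real.exp (T * (L j - L j0)) :=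
    htend.eventually (eventually_gt_nhds hd)
  filter_upwards [hev] with T hT
  have key : ∑ j, d j * Real.exp (T * L j)
      = Real.exp (T * L j0) * ∑ j, d j * Real.exp (T * (L j - L j0)) := by
    rw [Finset.mul_sum]
    apply Finset.sum_congr rfl
    intro j _
    rw [show Real.exp (T * L j0) * (d j * Real.exp (T * (L j - L j0)))
        = d j * (Real.exp (T * L j0) * Real.exp (T * (L j - L j0))) by ring, ← Real.exp_add]
    ring_nf
  rw [key]
  exact mul_pos (Real.exp_pos _) hT

/-- Vertex lemma: each exponent vector can be made the strict maximizer of a linear form. -/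
private lemma vertex {n : ℕ} (a : Fin (n + 1) → Fin n → ℤ)
    (hspan : Matrix.det (Matrix.of fun i j : Fin n =>
        ((a j.succ i - a 0 i : ℤ) : ℝ)) ≠ 0) (j0 : Fin (n + 1)) :
    ∃ v : Fin n → ℝ, ∀ j, j ≠ j0 →
      (∑ i, (a j i : ℝ) * v i) < ∑ i, (a j0 i : ℝ) * v i := by
  set M : Matrix (Fin n) (Fin n) ℝ :=
    Matrix.of fun i j : Fin n => ((a j.succ i - a 0 i : ℤ) : ℝ) with hM
  set u : Fin n → ℝ := fun l => if l.succ = j0 then 1 else -1 with hu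
  set v : Fin n → ℝ := Matrix.mulVec (Inv.inv (Matrix.transpose M)) u with hv
  have hdet : IsUnit M.transpose.det := by
    rw [Matrix.det_transpose]; exact isUnit_iff_ne_zero.mpr hspan
  have hkey : M.transpose.mulVec v = u := by
    rw [hv, Matrix.mulVec_mulVec, Matrix.mul_nonsing_inv _ hdet, Matrix.one_mulVec]
  set D : Fin (n + 1) → ℝ := fun j => ∑ i, ((a j i : ℝ) - (a 0 i : ℝ)) * v i with hD
  have hD0 : D 0 = 0 := by simp [hD]
  have hDs : ∀ l : Fin n, D l.succ = u l := by
    intro l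
    have := congrFun hkey l
    simp only [Matrix.mulVec, dotProduct, Matrix.transpose_apply, hM,
      Matrix.of_apply] at this
    rw [← this, hD]
    apply Finset.sum_congr rfl
    intro i _
    push_cast
    ring
  have hgoal : ∀ j, j ≠ j0 → D j < D j0 := by
    intro j hj
    rcases Fin.eq_zero_or_eq_succ j0 with h0 | ⟨k, hk⟩
    · subst h0
      rcases Fin.eq_zero_or_eq_succ j with h | ⟨l, hl⟩
      · exact absurd h hj
      · subst hl
        rw [hDs l, hD0, hu]
        simp only [if_neg hj]
        norm_num
    · subst hk
      have hj0 : D (Fin.succ k) = 1 := by rw [hDs k, hu]; simp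
      rcases Fin.eq_zero_or_eq_succ j with h | ⟨l, hl⟩
      · subst h; rw [hD0, hj0]; norm_num
      · subst hl
        rw [hDs l, hj0, hu]
        simp only [if_neg hj]
        norm_num
  refine ⟨v, fun j hj => ?_⟩
  have h1 : ∀ j, (∑ i, (a j i : ℝ) * v i) = D j + ∑ i, (a 0 i : ℝ) * v i := by
    intro j
    rw [hD, ← Finset.sum_add_distrib]
    apply Finset.sum_congr rfl
    intro i _
    ring
  rw [h1 j, h1 j0]
  exact add_lt_add_left (hgoal j hj) _

theorem same_sign_real_feasibility (n : ℕ) (a : Fin (n + 1) → Fin n → ℤ)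
    (c : Fin (n + 1) → ℝ)
    (hspan : Matrix.det (Matrix.of fun i j : Fin n =>
        ((a j.succ i - a 0 i : ℤ) : ℝ)) ≠ 0)
    (hc : (∀ j, 0 < c j) ∨ (∀ j, c j < 0)) :
    (∃ x : Fin n → ℝ, (∀ i, x i ≠ 0) ∧
        ∑ j, c j * ∏ i, x i ^ a j i = 0) ↔
      ∃ (i : Fin n) (j j' : Fin (n + 1)), Odd (a j i - a j' i) := by
  constructor
  · -- forward: contrapositive
    rintro ⟨x, hx, hfx⟩
    by_contra hodd
    push_neg at hodd
    have heven : ∀ (i : Fin n) (j j' : Fin (n+1)), Even (a j i - a j' i) := by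
      intro i j j'
      exact Int.not_odd_iff_even.mp (hodd i j j')
    set P : Fin (n+1) → ℝ := fun j => ∏ i, x i ^ (a j i - a 0 i) with hP
    have hPpos : ∀ j, 0 < P j := by
      intro j
      exact Finset.prod_pos fun i _ => Even.zpow_pos (heven i j 0) (hx i)
    have hsplit : ∀ j, (∏ i, x i ^ a j i) = (∏ i, x i ^ a 0 i) * P j := by
      intro j
      rw [hP, ← Finset.prod_mul_distrib]
      apply Finset.prod_congr rfl
      intro i _
      rw [← zpow_add₀ (hx i)]
      congr 1
      ring
    have hQ : (∏ i, x i ^ a 0 i) ≠ 0 := by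
      exact Finset.prod_ne_zero_iff.mpr fun i _ => zpow_ne_zero _ (hx i)
    have hsum : (∑ j, c j * P j) ≠ 0 := by
      rcases hc with hcp | hcn
      · exact ne_of_gt (Finset.sum_pos (fun j _ => mul_pos (hcp j) (hPpos j))
          ⟨0, Finset.mem_univ 0⟩)
      · exact ne_of_lt (Finset.sum_neg (fun j _ => mul_neg_of_neg_of_pos (hcn j) (hPpos j))
          ⟨0, Finset.mem_univ 0⟩)
    apply mul_ne_zero hQ hsum
    rw [← hfx, Finset.mul_sum]
    apply Finset.sum_congr rfl
    intro j _
    rw [hsplit j]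
    ring
  · rintro ⟨i0, j1, j1', hodd⟩
    -- sign vector
    set ε : Fin n → ℝ := fun i => if i = i0 then -1 else 1 with hε
    have hεne : ∀ i, ε i ≠ 0 := by
      intro i; rw [hε]; dsimp only; split <;> norm_num
    set σ : Fin (n+1) → ℝ := fun j => (-1 : ℝ) ^ a j i0 with hσ
    have hσ_eq : ∀ j, (∏ i, ε i ^ a j i) = σ j := by
      intro j
      rw [hσ, hε]
      dsimp only
      rw [Finset.prod_eq_single i0 (fun i _ hi => by rw [if_neg hi, one_zpow])
        (fun h => absurd (Finset.mem_univ i0) h)]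
      rw [if_pos rfl]
    set d : Fin (n+1) → ℝ := fun j => c j * σ j with hd
    have hdprod : d j1 * d j1' < 0 := by
      have h1 : σ j1 * σ j1' = -1 := by
        rw [hσ]
        dsimp only
        rw [← zpow_add₀ (by norm_num : (-1:ℝ) ≠ 0)]
        apply Odd.neg_one_zpow
        have : a j1 i0 + a j1' i0 = (a j1 i0 - a j1' i0) + 2 * a j1' i0 := by ring
        rw [this]
        exact hodd.add_even (even_two_mul _)
      have h2 : 0 < c j1 * c j1' := by
        rcases hc with hcp | hcn
        · exact mul_pos (hcp j1) (hcp j1')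
        · exact mul_pos_of_neg_of_neg (hcn j1) (hcn j1')
      calc d j1 * d j1' = (c j1 * c j1') * (σ j1 * σ j1') := by rw [hd]; ring
        _ = -(c j1 * c j1') := by rw [h1]; ring
        _ < 0 := neg_neg_iff_pos.mpr h2
    obtain ⟨jp, jm, hjp, hjm⟩ : ∃ jp jm, 0 < d jp ∧ d jm < 0 := by
      rcases mul_neg_iff.mp hdprod with ⟨h1, h2⟩ | ⟨h1, h2⟩
      · exact ⟨j1, j1', h1, h2⟩
      · exact ⟨j1', j1, h2, h1⟩
    obtain ⟨vP, hvP⟩ := vertex a hspan jp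
    obtain ⟨vM, hvM⟩ := vertex a hspan jm
    set LP : Fin (n+1) → ℝ := fun j => ∑ i, (a j i : ℝ) * vP i with hLP
    set LM : Fin (n+1) → ℝ := fun j => ∑ i, (a j i : ℝ) * vM i with hLM
    have hev1 : ∀ᶠ T in atTop, 0 < ∑ j, d j * Real.exp (T * LP j) :=
      dominant LP d jp hvP hjp
    have hev2 : ∀ᶠ T in atTop, (∑ j, d j * Real.exp (T * LM j)) < 0 := by
      have := dominant LM (fun j => -d j) jm hvM (by simpa using hjm)
      filter_upwards [this] with T hT
      have : (0:ℝ) < -∑ j, d j * Real.exp (T * LM j) := by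
        rw [← Finset.sum_neg_distrib]
        convert hT using 2 with j
        ring
      linarith
    obtain ⟨T, hT1, hT2⟩ := (hev1.and hev2).exists
    set G : ℝ → ℝ := fun t => ∑ j, d j * Real.exp ((1 - t) * (T * LM j) + t * (T * LP j))
      with hG
    have hGcont : Continuous G := by
      apply continuous_finset_sum
      intro j _
      fun_prop
    have hG0 : G 0 < 0 := by
      rw [hG]; dsimp only
      convert hT2 using 3 with j
      ring
    have hG1 : 0 < G 1 := by
      rw [hG]; dsimp only
      convert hT1 using 3 with j
      ring
    have hmem : (0:ℝ) ∈ Set.Icc (G 0) (G 1) := ⟨le_of_lt hG0, le_of_lt hG1⟩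
    obtain ⟨t0, ht0mem, ht0⟩ := intermediate_value_Icc zero_le_one hGcont.continuousOn hmem
    -- construct the point
    set y : Fin n → ℝ := fun i => (1 - t0) * (T * vM i) + t0 * (T * vP i) with hy
    refine ⟨fun i => ε i * Real.exp (y i), fun i => mul_ne_zero (hεne i) (Real.exp_ne_zero _), ?_⟩
    have hprod : ∀ j, (∏ i, (ε i * Real.exp (y i)) ^ a j i)
        = σ j * Real.exp (∑ i, (a j i : ℝ) * y i) := by
      intro j
      have : ∀ i, (ε i * Real.exp (y i)) ^ a j i
          = ε i ^ a j i * Real.exp ((a j i : ℝ) * y i) := by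
        intro i
        rw [mul_zpow, exp_zpow']
      rw [Finset.prod_congr rfl (fun i _ => this i), Finset.prod_mul_distrib, hσ_eq,
        Real.exp_sum]
    have hexp : ∀ j, (∑ i, (a j i : ℝ) * y i) = (1 - t0) * (T * LM j) + t0 * (T * LP j) := by
      intro j
      rw [hLM, hLP, hy]
      dsimp only
      rw [Finset.mul_sum, Finset.mul_sum, Finset.mul_sum, Finset.mul_sum,
        ← Finset.sum_add_distrib]
      apply Finset.sum_congr rfl
      intro i _
      ring
    calc ∑ j, c j * ∏ i, (ε i * Real.exp (y i)) ^ a j i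
        = G t0 := by
          rw [hG]
          apply Finset.sum_congr rfl
          intro j _
          rw [hprod j, hexp j, hd]
          ring
      _ = 0 := ht0
end

section
/- Let A ⊂ Z^n be a non-degenerate circuit with signed minor vector b (so Σ b_i = 0 and Σ b_i a_i = 0, all b_i ≠ 0). Suppose the positive zero set Z_+(f) of f(x) = Σ_{i=1}^{n+2} c_i x^{a_i} contains a degenerate point ζ ∈ R_+^n (i.e., f(ζ) = 0 and ∇f(ζ) = 0). Then sign(c_1 b_1) = sign(c_2 b_2) = ... = sign(c_{n+2} b_{n+2}) and ∏_{i=1}^{n+2} (σ·c_i/b_i)^{σ·b_i} = 1, where σ = sign(b_1 c_1). -/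
theorem circuit_discriminant_degenerate_point (n : ℕ)
    (a : Fin (n + 2) → Fin n → ℤ) (b : Fin (n + 2) → ℤ) (c : Fin (n + 2) → ℝ)
    (hdep : ¬ AffineIndependent ℝ (fun i k => ((a i k : ℤ) : ℝ)))
    (hindep : ∀ s : Fin (n + 2), AffineIndependent ℝ
      (fun i : {i : Fin (n + 2) // i ≠ s} => fun k => ((a i.1 k : ℤ) : ℝ)))
    (hb : ∀ i, b i ≠ 0) (hb0 : ∑ i, b i = 0)
    (hba : ∀ k, ∑ i, b i * a i k = 0)
    (hc : ∀ i, c i ≠ 0)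
    (ζ : Fin n → ℝ) (hζ : ∀ k, 0 < ζ k)
    (hroot : ∑ i, c i * ∏ k, ζ k ^ a i k = 0)
    (hdegen : ∀ k, ∑ i, c i * (a i k : ℝ) * ∏ l, ζ l ^ a i l = 0) :
    (∀ i, Real.sign (c i * b i) = Real.sign (c 0 * b 0)) ∧
    (∏ i, (Real.sign (c 0 * b 0) * c i / (b i : ℝ)) ^
        (Real.sign (c 0 * b 0) * (b i : ℝ)) = 1) := by
  classical
  set P : Fin (n + 2) → ℝ := fun i => ∏ k, ζ k ^ a i k with hPdef
  have hP : ∀ i, 0 < P i := fun i => Finset.prod_pos fun k _ => zpow_pos (hζ k) _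
  set m : Fin (n + 2) → ℝ := fun i => c i * P i with hmdef
  have hm : ∀ i, m i ≠ 0 := fun i => mul_ne_zero (hc i) (hP i).ne'
  have hmsum : ∑ i, m i = 0 := hroot
  have hma : ∀ k, ∑ i, (a i k : ℝ) * m i = 0 := by
    intro k
    rw [← hdegen k]
    exact Finset.sum_congr rfl fun i _ => by simp [hmdef]; ring
  have hbR : ∑ i, (b i : ℝ) = 0 := by exact_mod_cast congrArg (fun z : ℤ => (z : ℝ)) hb0
  have hbaR : ∀ k, ∑ i, (b i : ℝ) * (a i k : ℝ) = 0 := by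
    intro k; exact_mod_cast congrArg (fun z : ℤ => (z : ℝ)) (hba k)
  set w : Fin (n + 2) → ℝ := fun i => m 0 * b i - b 0 * m i with hwdef
  have hw0 : w 0 = 0 := by simp [hwdef]; ring
  have hwsum : ∑ i, w i = 0 := by
    simp only [hwdef, Finset.sum_sub_distrib, ← Finset.mul_sum, hbR, hmsum, mul_zero, sub_zero]
  have hwa : ∀ k, ∑ i, w i * (a i k : ℝ) = 0 := by
    intro k
    have : ∑ i, w i * (a i k : ℝ)
        = m 0 * (∑ i, (b i : ℝ) * a i k) - b 0 * (∑ i, (a i k : ℝ) * m i) := by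
      rw [Finset.mul_sum, Finset.mul_sum, ← Finset.sum_sub_distrib]
      exact Finset.sum_congr rfl fun i _ => by simp [hwdef]; ring
    rw [this, hbaR k, hma k, mul_zero, mul_zero, sub_zero]
  have hsub : ∀ g : Fin (n + 2) → ℝ,
      ∑ i : {i : Fin (n + 2) // i ≠ 0}, g i.1 = (∑ i, g i) - g 0 := by
    intro g
    rw [← Finset.sum_subtype (Finset.univ.erase 0) (fun x => by simp) g,
      Finset.sum_erase_eq_sub (Finset.mem_univ 0)]
  have hkey : ∀ i, w i = 0 := by
    have hAI := affineIndependent_iff.mp (hindep 0) Finset.univ (fun j => w j.1) ?_ ?_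
    · intro i
      by_cases h0 : i = 0
      · rw [h0]; exact hw0
      · exact hAI ⟨i, h0⟩ (Finset.mem_univ _)
    · rw [show (Finset.univ.sum fun j : {i : Fin (n + 2) // i ≠ 0} => w j.1) =
          (∑ i, w i) - w 0 from hsub w, hwsum, hw0, sub_zero]
    · funext k
      have : (∑ e : {i : Fin (n + 2) // i ≠ 0},
          w e.1 • (fun k => ((a e.1 k : ℤ) : ℝ))) k
          = ∑ e : {i : Fin (n + 2) // i ≠ 0}, w e.1 * (a e.1 k : ℝ) := by
        simp [Finset.sum_apply]
      rw [this, hsub (fun i => w i * (a i k : ℝ)), hwa k, hw0, zero_mul, sub_zero]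
      rfl
  have key : ∀ i, m 0 * (b i : ℝ) = (b 0 : ℝ) * m i := fun i => by
    have := hkey i; simp only [hwdef] at this; linarith
  have hb0R : (b 0 : ℝ) ≠ 0 := Int.cast_ne_zero.mpr (hb 0)
  have hbiR : ∀ i, (b i : ℝ) ≠ 0 := fun i => Int.cast_ne_zero.mpr (hb i)
  obtain ⟨t, htdef⟩ : ∃ t : ℝ, t = m 0 / (b 0 : ℝ) := ⟨_, rfl⟩
  have hmt : ∀ i, m i = t * b i := by
    intro i
    rw [htdef, div_mul_eq_mul_div, eq_comm, div_eq_iff hb0R]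
    linarith [key i]
  have ht : t ≠ 0 := fun h => hm 0 (by rw [hmt 0, h, zero_mul])
  have hct : ∀ i, c i = t * b i / P i := by
    intro i
    rw [eq_div_iff (hP i).ne']
    have := hmt i; simpa [hmdef] using this
  have hsign : ∀ i, Real.sign (c i * b i) = Real.sign t := by
    intro i
    have hcb : c i * b i = ((b i : ℝ) ^ 2 / P i) * t := by
      rw [hct i]; field_simp
    have hr : 0 < ((b i : ℝ)) ^ 2 / P i :=
      div_pos (lt_of_le_of_ne (sq_nonneg _) (Ne.symm (pow_ne_zero 2 (hbiR i)))) (hP i)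
    rw [hcb]
    rcases lt_trichotomy t 0 with h | h | h
    · rw [Real.sign_of_neg h, Real.sign_of_neg (mul_neg_of_pos_of_neg hr h)]
    · exact absurd h ht
    · rw [Real.sign_of_pos h, Real.sign_of_pos (mul_pos hr h)]
  have hσ : Real.sign (c 0 * b 0) = Real.sign t := hsign 0
  refine ⟨fun i => (hsign i).trans hσ.symm, ?_⟩
  rw [hσ]
  have hst : Real.sign t * t = |t| := by
    rcases lt_trichotomy t 0 with h | h | h
    · rw [Real.sign_of_neg h, abs_of_neg h]; ring
    · exact absurd h ht
    · rw [Real.sign_of_pos h, abs_of_pos h]; ring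
  have habs : (0 : ℝ) < |t| := abs_pos.mpr ht
  have hbase : ∀ i, Real.sign t * c i / b i = |t| / P i := by
    intro i
    rw [hct i, ← hst]
    field_simp
    rw [mul_comm (b i : ℝ) (P i), mul_div_mul_right _ _ (hbiR i)]
  set e : Fin (n + 2) → ℝ := fun i => Real.sign t * b i with hedef
  have hQ : ∀ i, P i ^ e i = ∏ k, ζ k ^ ((a i k : ℝ) * e i) := by
    intro i
    rw [hPdef]
    rw [← Real.finset_prod_rpow _ _ (fun k _ => (zpow_pos (hζ k) _).le)]
    exact Finset.prod_congr rfl fun k _ => by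
      rw [← Real.rpow_intCast (ζ k) (a i k), ← Real.rpow_mul (hζ k).le]
  calc ∏ i, (Real.sign t * c i / (b i : ℝ)) ^ (Real.sign t * (b i : ℝ))
      = ∏ i, (|t| ^ e i / ∏ k, ζ k ^ ((a i k : ℝ) * e i)) := by
        refine Finset.prod_congr rfl fun i _ => ?_
        rw [hbase i, Real.div_rpow (abs_nonneg t) (hP i).le, hQ i]
    _ = (∏ i, |t| ^ e i) / ∏ i, ∏ k, ζ k ^ ((a i k : ℝ) * e i) := by
        rw [Finset.prod_div_distrib]
    _ = 1 := by
        have h1 : (∏ i, |t| ^ e i) = 1 := by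
          rw [← Real.rpow_sum_of_pos habs]
          have : ∑ i, e i = 0 := by
            simp only [hedef, ← Finset.mul_sum, hbR, mul_zero]
          rw [this, Real.rpow_zero]
        have h2 : (∏ i, ∏ k, ζ k ^ ((a i k : ℝ) * e i)) = 1 := by
          rw [Finset.prod_comm]
          refine Finset.prod_eq_one fun k _ => ?_
          rw [← Real.rpow_sum_of_pos (hζ k)]
          have : ∑ i, (a i k : ℝ) * e i = 0 := by
            have : ∑ i, (a i k : ℝ) * e i = Real.sign t * ∑ i, (b i : ℝ) * a i k := by
              rw [Finset.mul_sum]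
              exact Finset.sum_congr rfl fun i _ => by simp [hedef]; ring
            rw [this, hbaR k, mul_zero]
          rw [this, Real.rpow_zero]
        rw [h1, h2, div_one]
end

section
/- Let a_1,...,a_{n+1} ∈ Z^n be affinely independent (so Conv{a_1,...,a_{n+1}} is an n-simplex) and let a_{n+2} lie in the interior of this simplex, with barycentric coordinates λ_1,...,λ_{n+1} > 0, Σλ_i = 1, a_{n+2} = Σ λ_i a_i. Suppose f(x) = Σ_{i=1}^{n+1} c_i x^{a_i} − c·x^{a_{n+2}} with all c_i > 0 and c > 0. If c < ∏_{i=1}^{n+1} (c_i/λ_i)^{λ_i}, then f(x) > 0 for all x ∈ R_+^n; in particular f has no zero in the positive orthant. -/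
theorem simplex_circuit_small_coefficient_positive (n : ℕ)
    (a : Fin (n + 1) → Fin n → ℤ) (a' : Fin n → ℤ)
    (hindep : AffineIndependent ℝ (fun i k => ((a i k : ℤ) : ℝ)))
    (lam : Fin (n + 1) → ℝ) (hlam : ∀ i, 0 < lam i) (hsum : ∑ i, lam i = 1)
    (hbary : ∀ k, ∑ i, lam i * (a i k : ℝ) = (a' k : ℝ))
    (c : Fin (n + 1) → ℝ) (hc : ∀ i, 0 < c i) (C : ℝ) (hC : 0 < C)
    (hlt : C < ∏ i, (c i / lam i) ^ lam i) :
    ∀ x : Fin n → ℝ, (∀ k, 0 < x k) →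
      0 < (∑ i, c i * ∏ k, x k ^ a i k) - C * ∏ k, x k ^ a' k := by
  intro x hx
  have hXpos : ∀ i, 0 < ∏ k, x k ^ a i k := fun i =>
    Finset.prod_pos fun k _ => zpow_pos (hx k) _
  have hX'pos : 0 < ∏ k, x k ^ a' k :=
    Finset.prod_pos fun k _ => zpow_pos (hx k) _
  set X : Fin (n + 1) → ℝ := fun i => ∏ k, x k ^ a i k with hX
  -- key identity: ∏ i, (X i) ^ lam i = ∏ k, x k ^ a' k
  have hkey : ∏ i, X i ^ lam i = ∏ k, x k ^ a' k := by
    have h1 : ∀ i, X i ^ lam i = ∏ k, x k ^ (lam i * (a i k : ℝ)) := by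
      intro i
      rw [hX]
      rw [← Real.finset_prod_rpow _ _ (fun k _ => (zpow_pos (hx k) _).le)]
      refine Finset.prod_congr rfl fun k _ => ?_
      rw [← Real.rpow_intCast (x k) (a i k), ← Real.rpow_mul (hx k).le,
        mul_comm]
    rw [Finset.prod_congr rfl fun i _ => h1 i, Finset.prod_comm]
    refine Finset.prod_congr rfl fun k _ => ?_
    rw [← Real.rpow_sum_of_pos (hx k), hbary k, Real.rpow_intCast]
  -- weighted AM-GM
  have hgm : (∏ i, (c i / lam i) ^ lam i) * ∏ k, x k ^ a' k
      ≤ ∑ i, c i * X i := by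
    have := Real.geom_mean_le_arith_mean_weighted Finset.univ lam
      (fun i => (c i / lam i) * X i) (fun i _ => (hlam i).le) hsum
      (fun i _ => (mul_pos (div_pos (hc i) (hlam i)) (hXpos i)).le)
    calc (∏ i, (c i / lam i) ^ lam i) * ∏ k, x k ^ a' k
        = ∏ i, ((c i / lam i) * X i) ^ lam i := by
          rw [← hkey, ← Finset.prod_mul_distrib]
          exact Finset.prod_congr rfl fun i _ =>
            (Real.mul_rpow (div_pos (hc i) (hlam i)).le (hXpos i).le).symm
      _ ≤ ∑ i, lam i * ((c i / lam i) * X i) := this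
      _ = ∑ i, c i * X i := Finset.sum_congr rfl fun i _ => by
          field_simp
          rw [mul_assoc, mul_div_cancel_left₀ _ (hlam i).ne']
  have hCX : C * ∏ k, x k ^ a' k < (∏ i, (c i / lam i) ^ lam i) * ∏ k, x k ^ a' k :=
    mul_lt_mul_of_pos_right hlt hX'pos
  linarith
end
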